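/- Let A be a group, B a subgroup of A, and let λ, ρ : A → A *_B A be the two canonical homomorphisms of A into the amalgamated free product of A with itself over B. Then dom_A(B) = λ⁻¹(λ(A) ∩ ρ(A)) = ρ⁻¹(λ(A) ∩ ρ(A)); in particular, a ∈ dom_A(B) if and only if λ(a) lies in the image of ρ, if and only if ρ(a) lies in the image of λ. -/
import Mathlib


universe u

/-- The dominion of a subgroup `B` of a group `A` in the category of all groups:
the set of `a ∈ A` such that any two group homomorphisms out of `A` agreeing on `B`
agree at `a`. -/
def GroupDominion {A : Type u} [Group A] (B : Subgroup A) : Set A :=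
  {a : A | ∀ (C : Type u) [Group C], ∀ f g : A →* C,
    (∀ b ∈ B, f b = g b) → f a = g a}

/-- Let `A` be a group, `B` a subgroup of `A`, and `lam, rho : A →* P` the two canonical
homomorphisms of `A` into the amalgamated free product `P = A *_B A` of `A` with itself
over `B` (characterized by its universal property as the pushout of `B ↪ A` along itself).
Then `dom_A(B) = lam⁻¹(lam(A) ∩ rho(A)) = rho⁻¹(lam(A) ∩ rho(A))`; in particular,
`a ∈ dom_A(B)` iff `lam a` lies in the image of `rho`, iff `rho a` lies in the image
of `lam`. -/
theorem dominion_eq_preimage_of_intersection {A : Type u} [Group A] (B : Subgroup A)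
    {P : Type u} [Group P] (lam rho : A →* P)
    (hagree : ∀ b ∈ B, lam b = rho b)
    (huniv : ∀ (C : Type u) [Group C], ∀ f g : A →* C, (∀ b ∈ B, f b = g b) →
      ∃! h : P →* C, h.comp lam = f ∧ h.comp rho = g) :
    GroupDominion B = lam ⁻¹' (Set.range lam ∩ Set.range rho) ∧
    GroupDominion B = rho ⁻¹' (Set.range lam ∩ Set.range rho) ∧
    (∀ a : A, a ∈ GroupDominion B ↔ lam a ∈ Set.range rho) ∧
    (∀ a : A, a ∈ GroupDominion B ↔ rho a ∈ Set.range lam) := by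
  -- Key cancellation: if `lam a = rho a'` then `a = a'`.
  have key : ∀ a a' : A, lam a = rho a' → a = a' := by
    intro a a' h
    obtain ⟨k, ⟨hk1, hk2⟩, -⟩ :=
      huniv A (MonoidHom.id A) (MonoidHom.id A) (fun b _ => rfl)
    have h1 : k (lam a) = a := congrArg (fun f : A →* A => f a) hk1
    have h2 : k (rho a') = a' := congrArg (fun f : A →* A => f a') hk2
    rw [h] at h1
    rw [h2] at h1
    exact h1.symm
  -- Equalizer characterization of the dominion.
  have dom_iff : ∀ a : A, a ∈ GroupDominion B ↔ lam a = rho a := by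
    intro a
    constructor
    · intro ha
      exact ha P lam rho hagree
    · intro h C _ f g hfg
      obtain ⟨k, ⟨hk1, hk2⟩, -⟩ := huniv C f g hfg
      have h1 : k (lam a) = f a := congrArg (fun f' : A →* C => f' a) hk1
      have h2 : k (rho a) = g a := congrArg (fun f' : A →* C => f' a) hk2
      rw [← h1, ← h2, h]
  have mem_iff : ∀ a : A, a ∈ GroupDominion B ↔ lam a ∈ Set.range rho := by
    intro a
    rw [dom_iff a]
    constructor
    · intro h; exact ⟨a, h.symm⟩
    · rintro ⟨a', ha'⟩
      have h := key a a' ha'.symm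
      rw [← h] at ha'
      exact ha'.symm
  have mem_iff' : ∀ a : A, a ∈ GroupDominion B ↔ rho a ∈ Set.range lam := by
    intro a
    rw [dom_iff a]
    constructor
    · intro h; exact ⟨a, h⟩
    · rintro ⟨a', ha'⟩
      obtain rfl := key a' a ha'
      exact ha'
  refine ⟨?_, ?_, mem_iff, mem_iff'⟩
  · ext a
    simp only [Set.mem_preimage, Set.mem_inter_iff]
    rw [mem_iff a]
    exact ⟨fun h => ⟨⟨a, rfl⟩, h⟩, fun h => h.2⟩
  · ext a
    simp only [Set.mem_preimage, Set.mem_inter_iff]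
    rw [mem_iff' a]
    exact ⟨fun h => ⟨h, ⟨a, rfl⟩⟩, fun h => h.1⟩
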